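/- Let (N, M, {v_i}) be a fair division instance with n agents, m goods, and additive valuations, and let (N, {1,…,m}, {v'_i}) be its ordered counterpart, where v'_i(j) is the value under v_i of the j-th most valuable good of M according to agent i. For every partition A' = (A'_1,…,A'_n) of {1,…,m} among the n agents, there exists a partition A = (A_1,…,A_n) of M among the n agents such that v_i(A_i) ≥ Σ_{j ∈ A'_i} v'_i(j) for every agent i. -/
import Mathlib


open Finset

noncomputable def pick {G : Type*} [Fintype G] [DecidableEq G] [Nonempty G]
    (τ : ℕ → (Fin (Fintype.card G) ≃ G)) : ℕ → G
  | j =>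
    if h : (Finset.univ.filter fun k =>
        τ j k ∉ (Finset.range j).attach.image fun j' => pick τ j'.1).Nonempty then
      τ j (Finset.min' _ h)
    else Classical.arbitrary G
  decreasing_by all_goals exact Finset.mem_range.mp j'.2

noncomputable def takenSet {G : Type*} [Fintype G] [DecidableEq G] [Nonempty G]
    (τ : ℕ → (Fin (Fintype.card G) ≃ G)) (j : ℕ) : Finset G :=
  (Finset.range j).image (pick τ)

lemma pick_eq {G : Type*} [Fintype G] [DecidableEq G] [Nonempty G]
    (τ : ℕ → (Fin (Fintype.card G) ≃ G)) (j : ℕ) :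
    pick τ j =
      if h : (Finset.univ.filter fun k => τ j k ∉ takenSet τ j).Nonempty then
        τ j (Finset.min' _ h)
      else Classical.arbitrary G := by
  rw [pick]
  have : ((Finset.range j).attach.image fun j' => pick τ j'.1) = takenSet τ j := by
    ext g; simp [takenSet]
  simp_rw [this]

lemma takenSet_card_le {G : Type*} [Fintype G] [DecidableEq G] [Nonempty G]
    (τ : ℕ → (Fin (Fintype.card G) ≃ G)) (j : ℕ) : (takenSet τ j).card ≤ j := by
  calc (takenSet τ j).card ≤ (Finset.range j).card := Finset.card_image_le
  _ = j := Finset.card_range j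

lemma filter_nonempty {G : Type*} [Fintype G] [DecidableEq G] [Nonempty G]
    (τ : ℕ → (Fin (Fintype.card G) ≃ G)) {j : ℕ} (hj : j < Fintype.card G) :
    (Finset.univ.filter fun k => τ j k ∉ takenSet τ j).Nonempty := by
  by_contra h
  rw [Finset.not_nonempty_iff_eq_empty, Finset.filter_eq_empty_iff] at h
  have hsub : Finset.univ.image (τ j) ⊆ takenSet τ j := by
    intro g hg
    obtain ⟨k, -, rfl⟩ := Finset.mem_image.mp hg
    simpa using h (Finset.mem_univ k)
  have hcard : Fintype.card G ≤ (takenSet τ j).card := by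
    have := Finset.card_le_card hsub
    rwa [Finset.card_image_of_injective _ (τ j).injective, Finset.card_univ,
      Fintype.card_fin] at this
  have := takenSet_card_le τ j
  omega

lemma pick_not_taken {G : Type*} [Fintype G] [DecidableEq G] [Nonempty G]
    (τ : ℕ → (Fin (Fintype.card G) ≃ G)) {j : ℕ} (hj : j < Fintype.card G) :
    pick τ j ∉ takenSet τ j := by
  rw [pick_eq, dif_pos (filter_nonempty τ hj)]
  have := Finset.min'_mem _ (filter_nonempty τ hj)
  exact (Finset.mem_filter.mp this).2

lemma pick_injOn {G : Type*} [Fintype G] [DecidableEq G] [Nonempty G]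
    (τ : ℕ → (Fin (Fintype.card G) ≃ G)) {j₁ j₂ : ℕ} (h1 : j₁ < j₂)
    (h2 : j₂ < Fintype.card G) : pick τ j₁ ≠ pick τ j₂ := by
  intro he
  apply pick_not_taken τ h2
  rw [← he]
  exact Finset.mem_image_of_mem _ (Finset.mem_range.mpr h1)

lemma pick_ge {G : Type*} [Fintype G] [DecidableEq G] [Nonempty G]
    (τ : ℕ → (Fin (Fintype.card G) ≃ G)) {j : ℕ} (hj : j < Fintype.card G)
    (v : G → ℝ) (hv : ∀ k k' : Fin (Fintype.card G), k ≤ k' → v (τ j k') ≤ v (τ j k)) :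
    v (τ j ⟨j, hj⟩) ≤ v (pick τ j) := by
  rw [pick_eq, dif_pos (filter_nonempty τ hj)]
  set s := Finset.univ.filter fun k => τ j k ∉ takenSet τ j with hs
  have hne := filter_nonempty τ hj
  -- there is k ≤ ⟨j, hj⟩ with τ j k not taken
  have hex : ∃ k : Fin (Fintype.card G), k ≤ ⟨j, hj⟩ ∧ τ j k ∉ takenSet τ j := by
    by_contra hc
    push_neg at hc
    have hsub : (Finset.Iic (⟨j, hj⟩ : Fin (Fintype.card G))).image (τ j) ⊆ takenSet τ j := by
      intro g hg
      obtain ⟨k, hk, rfl⟩ := Finset.mem_image.mp hg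
      exact hc k (Finset.mem_Iic.mp hk)
    have h1 : ((Finset.Iic (⟨j, hj⟩ : Fin (Fintype.card G))).image (τ j)).card = j + 1 := by
      rw [Finset.card_image_of_injective _ (τ j).injective, Fin.card_Iic]
    have := Finset.card_le_card hsub
    have := takenSet_card_le τ j
    omega
  obtain ⟨k, hk, hkt⟩ := hex
  have hks : k ∈ s := Finset.mem_filter.mpr ⟨Finset.mem_univ k, hkt⟩
  have hmin : s.min' hne ≤ ⟨j, hj⟩ := le_trans (Finset.min'_le s k hks) hk
  exact hv _ _ hmin

/-- Reduction to ordered instances, without copies. Given an additive instance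
(weights `w i`) and, for each agent, an ordering `σ i` of the goods by non-increasing value
(so the ordered counterpart has values `v'_i j = w i (σ i j)`), every partition `A'` of the
virtual goods can be converted into a partition `A` of the original goods with
`v_i(A_i) ≥ Σ_{j ∈ A'_i} v'_i(j)` for every agent `i`. -/
theorem stmt9 {G : Type*} [Fintype G] [DecidableEq G] (n : ℕ)
    (w : Fin n → G → ℝ) (hw : ∀ i g, 0 ≤ w i g)
    (σ : Fin n → (Fin (Fintype.card G) ≃ G))
    (hσ : ∀ i, ∀ j k : Fin (Fintype.card G), j ≤ k → w i (σ i k) ≤ w i (σ i j))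
    (A' : Fin n → Finset (Fin (Fintype.card G)))
    (hd' : ∀ i j, i ≠ j → Disjoint (A' i) (A' j))
    (hu' : Finset.univ.biUnion A' = Finset.univ) :
    ∃ A : Fin n → Finset G,
      (∀ i j, i ≠ j → Disjoint (A i) (A j)) ∧
      (Finset.univ.biUnion A = Finset.univ) ∧
      (∀ i, ∑ j ∈ A' i, w i (σ i j) ≤ ∑ g ∈ A i, w i g) := by
  by_cases hm : Fintype.card G = 0
  · have hG : IsEmpty G := Fintype.card_eq_zero_iff.mp hm
    have hF : IsEmpty (Fin (Fintype.card G)) := by rw [hm]; infer_instance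
    refine ⟨fun _ => ∅, by intro i j _; simp, ?_, ?_⟩
    · rw [Finset.eq_empty_of_isEmpty (Finset.univ : Finset G), ← Finset.subset_empty]
      intro g _
      exact (hG.false g).elim
    · intro i
      simp [Finset.eq_empty_of_isEmpty (A' i)]
  · have hm' : 0 < Fintype.card G := Nat.pos_of_ne_zero hm
    have hG : Nonempty G := Fintype.card_pos_iff.mp hm'
    have howner : ∀ j : Fin (Fintype.card G), ∃ i, j ∈ A' i := by
      intro j
      have hj : j ∈ Finset.univ.biUnion A' := hu'.symm ▸ Finset.mem_univ j
      simpa using Finset.mem_biUnion.mp hj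
    choose owner ho using howner
    have howner_eq : ∀ (i : Fin n) (j : Fin (Fintype.card G)), j ∈ A' i → owner j = i := by
      intro i j hj
      by_contra hne
      exact Finset.disjoint_left.mp (hd' (owner j) i hne) (ho j) hj
    set τ : ℕ → (Fin (Fintype.card G) ≃ G) := fun j =>
      if h : j < Fintype.card G then σ (owner ⟨j, h⟩) else σ (owner ⟨0, hm'⟩) with hτdef
    have hf : Function.Injective (fun j : Fin (Fintype.card G) => pick τ j.val) := by
      intro j1 j2 h
      by_contra hne
      rcases lt_or_gt_of_ne (Fin.val_ne_of_ne hne) with hlt | hlt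
      · exact pick_injOn τ hlt j2.isLt h
      · exact pick_injOn τ hlt j1.isLt h.symm
    refine ⟨fun i => (A' i).image (fun j => pick τ j.val), ?_, ?_, ?_⟩
    · intro i j hij
      exact (Finset.disjoint_image hf).mpr (hd' i j hij)
    · apply Finset.eq_univ_of_card
      rw [← Finset.biUnion_image, hu', Finset.card_image_of_injective _ hf,
        Finset.card_univ, Fintype.card_fin]
    · intro i
      rw [Finset.sum_image (fun a _ b _ h => hf h)]
      apply Finset.sum_le_sum
      intro j hj
      have hje : owner j = i := howner_eq i j hj
      have hτ : τ j.val = σ i := by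
        rw [hτdef]
        simp only [j.isLt, dif_pos, Fin.eta, hje]
      have hv : ∀ k k' : Fin (Fintype.card G), k ≤ k' →
          w i (τ j.val k') ≤ w i (τ j.val k) := by
        rw [hτ]; exact hσ i
      have := pick_ge τ j.isLt (w i) hv
      rwa [hτ, Fin.eta] at this
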